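/- If an antisymmetric weight function W on oriented triples of the vertices of an (n+2)-gon satisfies the tetrahedral constraints and there exist two triangulations T_i, T_f with W(T_i) - W(T_f) = 2n - 6, then the diameter of the flip graph on triangulations of the (n+2)-gon is at least 2n - 6. -/
import Mathlib


/-- `(a,b)` with `a < b` is a diagonal of the convex `(n+2)`-gon with vertices
`0, …, n+1`. -/
def IsDiagonal (n : ℕ) (d : ℕ × ℕ) : Prop :=
  d.1 + 2 ≤ d.2 ∧ d.2 ≤ n + 1 ∧ ¬(d.1 = 0 ∧ d.2 = n + 1)

/-- Two diagonals of a convex polygon cross. -/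
def Crosses (d e : ℕ × ℕ) : Prop :=
  (d.1 < e.1 ∧ e.1 < d.2 ∧ d.2 < e.2) ∨ (e.1 < d.1 ∧ d.1 < e.2 ∧ e.2 < d.2)

/-- A triangulation of the convex `(n+2)`-gon: a maximal set of pairwise
non-crossing diagonals. -/
def IsTriangulation (n : ℕ) (T : Finset (ℕ × ℕ)) : Prop :=
  (∀ d ∈ T, IsDiagonal n d) ∧
  (∀ d ∈ T, ∀ e ∈ T, ¬Crosses d e) ∧
  (∀ d, IsDiagonal n d → d ∉ T → ∃ e ∈ T, Crosses d e)

/-- Two triangulations differ by a flip: one diagonal `e` is replaced by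
another diagonal `f` (the opposite diagonal of the quadrilateral formed by the
two triangles adjacent to `e`). -/
def IsFlip (n : ℕ) (T₁ T₂ : Finset (ℕ × ℕ)) : Prop :=
  IsTriangulation n T₁ ∧ IsTriangulation n T₂ ∧
  ∃ e f, e ∈ T₁ ∧ f ∉ T₁ ∧ T₂ = insert f (T₁.erase e)

/-- The flip distance between two triangulations: the minimum number of flips
transforming one into the other. -/
noncomputable def flipDist (n : ℕ) (T₁ T₂ : Finset (ℕ × ℕ)) : ℕ :=
  sInf {m | ∃ g : ℕ → Finset (ℕ × ℕ), g 0 = T₁ ∧ g m = T₂ ∧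
    ∀ i < m, IsFlip n (g i) (g (i + 1))}


/-- `a < b` are joined by an edge of the triangulation `T` of the
`(n+2)`-gon: either a polygon side or a diagonal of `T`. -/
def IsEdge (n : ℕ) (T : Finset (ℕ × ℕ)) (a b : ℕ) : Prop :=
  b ≤ n + 1 ∧ (b = a + 1 ∨ (a = 0 ∧ b = n + 1) ∨ (a, b) ∈ T)

open Classical in
/-- The triangles of a triangulation `T` of the `(n+2)`-gon, each recorded as
an increasing triple `(a,b,c)` with `a < b < c` (which is the counterclockwise
orientation, the vertices being labeled counterclockwise). -/
noncomputable def trianglesOf (n : ℕ) (T : Finset (ℕ × ℕ)) : Finset (ℕ × ℕ × ℕ) :=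
  (Finset.range (n + 2) ×ˢ Finset.range (n + 2) ×ˢ Finset.range (n + 2)).filter
    (fun t => t.1 < t.2.1 ∧ t.2.1 < t.2.2 ∧ IsEdge n T t.1 t.2.1 ∧
      IsEdge n T t.2.1 t.2.2 ∧ IsEdge n T t.1 t.2.2)

/-- The weight of a triangulation: the sum of `W` over its counterclockwise
triangles. -/
noncomputable def weight (n : ℕ) (W : ℕ → ℕ → ℕ → ℝ) (T : Finset (ℕ × ℕ)) : ℝ :=
  ∑ t ∈ trianglesOf n T, W t.1 t.2.1 t.2.2



namespace FlipAux

lemma edge_mem {n : ℕ} {T : Finset (ℕ × ℕ)} {u v : ℕ} (h : IsEdge n T u v)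
    (h2 : u + 2 ≤ v) (h3 : ¬(u = 0 ∧ v = n + 1)) : (u, v) ∈ T := by
  rcases h.2 with h' | h' | h'
  · omega
  · exact absurd h' h3
  · exact h'

lemma inner_exists {n : ℕ} {T : Finset (ℕ × ℕ)} (hT : IsTriangulation n T)
    {a b : ℕ} (hab : (a,b) ∈ T) :
    ∃ p, a < p ∧ p < b ∧ IsEdge n T a p ∧ IsEdge n T p b := by
  obtain ⟨hd1, hd2, hd3⟩ := hT.1 _ hab
  simp only at hd1 hd2 hd3
  classical
  set s := (Finset.range b).filter (fun c => a < c ∧ IsEdge n T a c) with hs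
  have hne : s.Nonempty := by
    refine ⟨a+1, ?_⟩
    simp only [hs, Finset.mem_filter, Finset.mem_range]
    exact ⟨by omega, by omega, by omega, Or.inl rfl⟩
  set p := s.max' hne with hpdef
  have hp : p ∈ s := s.max'_mem hne
  simp only [hs, Finset.mem_filter, Finset.mem_range] at hp
  obtain ⟨hpb, hap, hedge⟩ := hp
  refine ⟨p, hap, hpb, hedge, ?_⟩
  by_contra hnb
  have hmem : (p, b) ∉ T := fun h => hnb ⟨hd2, Or.inr (Or.inr h)⟩
  have hb1 : b ≠ p + 1 := fun h => hnb ⟨hd2, Or.inl h⟩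
  have hdiag : IsDiagonal n (p, b) := ⟨by simp; omega, by simpa using hd2, by simp; omega⟩
  obtain ⟨g, hg, hcrs⟩ := hT.2.2 _ hdiag hmem
  obtain ⟨u, v⟩ := g
  have hduv := hT.1 _ hg
  simp only [IsDiagonal] at hduv
  rcases hcrs with ⟨h1,h2,h3⟩ | ⟨h1,h2,h3⟩
  · simp only at h1 h2 h3
    exact hT.2.1 _ hab _ hg (Or.inl ⟨by omega, h2, h3⟩)
  · simp only at h1 h2 h3
    rcases lt_trichotomy u a with hu | hu | hu
    · exact hT.2.1 _ hab _ hg (Or.inr ⟨hu, by omega, h3⟩)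
    · subst hu
      have hvs : v ∈ s := by
        simp only [hs, Finset.mem_filter, Finset.mem_range]
        exact ⟨h3, by omega, hduv.2.1, Or.inr (Or.inr hg)⟩
      have := s.le_max' v hvs
      omega
    · have hapm : (a, p) ∈ T := edge_mem hedge (by omega) (by omega)
      exact hT.2.1 _ hapm _ hg (Or.inl ⟨hu, h1, h2⟩)


lemma outer_exists {n : ℕ} {T : Finset (ℕ × ℕ)} (hT : IsTriangulation n T)
    {a b : ℕ} (hab : (a,b) ∈ T) :
    ∃ q, (q < a ∧ IsEdge n T q a ∧ IsEdge n T q b) ∨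
         (b < q ∧ IsEdge n T a q ∧ IsEdge n T b q) := by
  obtain ⟨hd1, hd2, hd3⟩ := hT.1 _ hab
  simp only at hd1 hd2 hd3
  classical
  by_cases ha0 : a = 0
  · -- a = 0 : pick q = min {q > b | IsEdge 0 q}
    subst ha0
    have hbn : b ≤ n := by omega
    set s := (Finset.range (n+2)).filter (fun q => b < q ∧ IsEdge n T 0 q) with hs
    have hne : s.Nonempty := by
      refine ⟨n+1, ?_⟩
      simp only [hs, Finset.mem_filter, Finset.mem_range]
      exact ⟨by omega, by omega, by omega, Or.inr (Or.inl ⟨rfl, rfl⟩)⟩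
    set q := s.min' hne with hqdef
    have hq : q ∈ s := s.min'_mem hne
    simp only [hs, Finset.mem_filter, Finset.mem_range] at hq
    obtain ⟨hqr, hbq, hedge⟩ := hq
    refine ⟨q, Or.inr ⟨hbq, hedge, ?_⟩⟩
    by_contra hnb
    have hmem : (b, q) ∉ T := fun h => hnb ⟨by omega, Or.inr (Or.inr h)⟩
    have hq1 : q ≠ b + 1 := fun h => hnb ⟨by omega, Or.inl h⟩
    have hdiag : IsDiagonal n (b, q) := ⟨by simp; omega, by simp; omega, by simp; omega⟩
    obtain ⟨g, hg, hcrs⟩ := hT.2.2 _ hdiag hmem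
    obtain ⟨u, v⟩ := g
    have hduv := hT.1 _ hg
    simp only [IsDiagonal] at hduv
    rcases hcrs with ⟨h1,h2,h3⟩ | ⟨h1,h2,h3⟩
    · -- b < u < q < v
      simp only at h1 h2 h3
      have hq0 : (0, q) ∈ T := edge_mem hedge (by omega) (by omega)
      exact hT.2.1 _ hq0 _ hg (Or.inl ⟨by omega, h2, h3⟩)
    · -- u < b < v < q
      simp only at h1 h2 h3
      rcases Nat.eq_zero_or_pos u with hu | hu
      · subst hu
        have hvs : v ∈ s := by
          simp only [hs, Finset.mem_filter, Finset.mem_range]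
          exact ⟨by omega, by omega, hduv.2.1, Or.inr (Or.inr hg)⟩
        have := s.min'_le v hvs
        omega
      · exact hT.2.1 _ hab _ hg (Or.inl ⟨by omega, h1, h2⟩)
  · by_cases hbn : b = n + 1
    · -- b = n+1 : pick q = max {q < a | IsEdge q (n+1)}
      subst hbn
      have ha1 : 1 ≤ a := by omega
      set s := (Finset.range a).filter (fun q => IsEdge n T q (n+1)) with hs
      have hne : s.Nonempty := by
        refine ⟨0, ?_⟩
        simp only [hs, Finset.mem_filter, Finset.mem_range]
        exact ⟨by omega, by omega, Or.inr (Or.inl ⟨rfl, rfl⟩)⟩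
      set q := s.max' hne with hqdef
      have hq : q ∈ s := s.max'_mem hne
      simp only [hs, Finset.mem_filter, Finset.mem_range] at hq
      obtain ⟨hqa, hedge⟩ := hq
      refine ⟨q, Or.inl ⟨hqa, ?_, hedge⟩⟩
      by_contra hnb
      have hmem : (q, a) ∉ T := fun h => hnb ⟨by omega, Or.inr (Or.inr h)⟩
      have hq1 : a ≠ q + 1 := fun h => hnb ⟨by omega, Or.inl h⟩
      have hdiag : IsDiagonal n (q, a) := ⟨by simp; omega, by simp; omega, by simp; omega⟩
      obtain ⟨g, hg, hcrs⟩ := hT.2.2 _ hdiag hmem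
      obtain ⟨u, v⟩ := g
      have hduv := hT.1 _ hg
      simp only [IsDiagonal] at hduv
      rcases hcrs with ⟨h1,h2,h3⟩ | ⟨h1,h2,h3⟩
      · -- q < u < a < v
        simp only at h1 h2 h3
        rcases Nat.lt_or_ge v (n+1) with hv | hv
        · exact hT.2.1 _ hab _ hg (Or.inr ⟨h2, by omega, hv⟩)
        · have hveq : v = n + 1 := by omega
          subst hveq
          have hus : u ∈ s := by
            simp only [hs, Finset.mem_filter, Finset.mem_range]
            exact ⟨h2, by omega, Or.inr (Or.inr hg)⟩
          have := s.le_max' u hus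
          omega
      · -- u < q < v < a
        simp only at h1 h2 h3
        have hqn : (q, n+1) ∈ T := edge_mem hedge (by omega) (by omega)
        exact hT.2.1 _ hqn _ hg (Or.inr ⟨h1, by omega, by omega⟩)
    · -- 1 ≤ a, b ≤ n
      have ha1 : 1 ≤ a := by omega
      have hbn' : b ≤ n := by omega
      set s₁ := (Finset.range (n+2)).filter (fun v => b < v ∧ IsEdge n T a v) with hs₁
      by_cases hne₁ : s₁.Nonempty
      · set q := s₁.min' hne₁ with hqdef
        have hq : q ∈ s₁ := s₁.min'_mem hne₁
        simp only [hs₁, Finset.mem_filter, Finset.mem_range] at hq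
        obtain ⟨hqr, hbq, hedge⟩ := hq
        refine ⟨q, Or.inr ⟨hbq, hedge, ?_⟩⟩
        by_contra hnb
        have hmem : (b, q) ∉ T := fun h => hnb ⟨by omega, Or.inr (Or.inr h)⟩
        have hq1 : q ≠ b + 1 := fun h => hnb ⟨by omega, Or.inl h⟩
        have hdiag : IsDiagonal n (b, q) := ⟨by simp; omega, by simp [hedge.1], by simp; omega⟩
        obtain ⟨g, hg, hcrs⟩ := hT.2.2 _ hdiag hmem
        obtain ⟨u, v⟩ := g
        have hduv := hT.1 _ hg
        simp only [IsDiagonal] at hduv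
        have haq : (a, q) ∈ T := edge_mem hedge (by omega) (by omega)
        rcases hcrs with ⟨h1,h2,h3⟩ | ⟨h1,h2,h3⟩
        · -- b < u < q < v
          simp only at h1 h2 h3
          exact hT.2.1 _ haq _ hg (Or.inl ⟨by omega, h2, h3⟩)
        · -- u < b < v < q
          simp only at h1 h2 h3
          rcases lt_trichotomy u a with hu | hu | hu
          · exact hT.2.1 _ haq _ hg (Or.inr ⟨hu, by omega, h3⟩)
          · subst hu
            have hvs : v ∈ s₁ := by
              simp only [hs₁, Finset.mem_filter, Finset.mem_range]
              exact ⟨by omega, h2, hduv.2.1, Or.inr (Or.inr hg)⟩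
            have := s₁.min'_le v hvs
            omega
          · exact hT.2.1 _ hab _ hg (Or.inl ⟨hu, by omega, h2⟩)
      · -- no neighbour of a above b; pick q = min {u < a | IsEdge u a}
        set s₂ := (Finset.range a).filter (fun u => IsEdge n T u a) with hs₂
        have hne₂ : s₂.Nonempty := by
          refine ⟨a-1, ?_⟩
          simp only [hs₂, Finset.mem_filter, Finset.mem_range]
          constructor
          · omega
          · exact ⟨by omega, Or.inl (by omega)⟩
        set q := s₂.min' hne₂ with hqdef
        have hq : q ∈ s₂ := s₂.min'_mem hne₂
        simp only [hs₂, Finset.mem_filter, Finset.mem_range] at hq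
        obtain ⟨hqa, hedge⟩ := hq
        refine ⟨q, Or.inl ⟨hqa, hedge, ?_⟩⟩
        by_contra hnb
        have hmem : (q, b) ∉ T := fun h => hnb ⟨by omega, Or.inr (Or.inr h)⟩
        have hdiag : IsDiagonal n (q, b) := ⟨by simp; omega, by simp; omega, by simp; omega⟩
        obtain ⟨g, hg, hcrs⟩ := hT.2.2 _ hdiag hmem
        obtain ⟨u, v⟩ := g
        have hduv := hT.1 _ hg
        simp only [IsDiagonal] at hduv
        rcases hcrs with ⟨h1,h2,h3⟩ | ⟨h1,h2,h3⟩
        · -- q < u < b < v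
          simp only at h1 h2 h3
          rcases lt_trichotomy u a with hu | hu | hu
          · have hqam : (q, a) ∈ T := edge_mem hedge (by omega) (by omega)
            exact hT.2.1 _ hqam _ hg (Or.inl ⟨h1, hu, by omega⟩)
          · subst hu
            exact hne₁ ⟨v, by
              simp only [hs₁, Finset.mem_filter, Finset.mem_range]
              exact ⟨by omega, h3, hduv.2.1, Or.inr (Or.inr hg)⟩⟩
          · exact hT.2.1 _ hab _ hg (Or.inl ⟨hu, h2, h3⟩)
        · -- u < q < v < b
          simp only at h1 h2 h3
          rcases lt_trichotomy v a with hv | hv | hv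
          · have hqam : (q, a) ∈ T := edge_mem hedge (by omega) (by omega)
            exact hT.2.1 _ hqam _ hg (Or.inr ⟨h1, h2, hv⟩)
          · subst hv
            have hus : u ∈ s₂ := by
              simp only [hs₂, Finset.mem_filter, Finset.mem_range]
              exact ⟨by omega, hduv.2.1, Or.inr (Or.inr hg)⟩
            have := s₂.min'_le u hus
            omega
          · exact hT.2.1 _ hab _ hg (Or.inr ⟨by omega, hv, h3⟩)


lemma edge_transfer (hE : T₁.erase (a,b) = T₂.erase (x,y)) {u v : ℕ}
    (h : IsEdge n T₁ u v) (hne : (u,v) ≠ (a,b)) : IsEdge n T₂ u v := by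
  refine ⟨h.1, ?_⟩
  rcases h.2 with h' | h' | h'
  · exact Or.inl h'
  · exact Or.inr (Or.inl h')
  · refine Or.inr (Or.inr ?_)
    have : (u,v) ∈ T₁.erase (a,b) := Finset.mem_erase.2 ⟨hne, h'⟩
    rw [hE] at this
    exact (Finset.mem_erase.1 this).2

/-- An edge of `T₁`, distinct from `(a,b)`, cannot cross `(x,y) ∈ T₂`. -/
lemma cross_contra (hT₂ : IsTriangulation n T₂) (hE : T₁.erase (a,b) = T₂.erase (x,y))
    (hf2 : (x,y) ∈ T₂) {u v : ℕ} (h : IsEdge n T₁ u v) (hne : (u,v) ≠ (a,b))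
    (h2 : u + 2 ≤ v) (h3 : ¬(u = 0 ∧ v = n + 1))
    (hcr : (u < x ∧ x < v ∧ v < y) ∨ (x < u ∧ u < y ∧ y < v)) : False := by
  have h1 : (u, v) ∈ T₁ := edge_mem h h2 h3
  have : (u,v) ∈ T₁.erase (a,b) := Finset.mem_erase.2 ⟨hne, h1⟩
  rw [hE] at this
  exact hT₂.2.1 _ (Finset.mem_erase.1 this).2 _ hf2 hcr

lemma det_inner1 (hT₂ : IsTriangulation n T₂) (hE : T₁.erase (a,b) = T₂.erase (x,y))
    (hf2 : (x,y) ∈ T₂) (hda : IsDiagonal n (a,b)) (hdf : IsDiagonal n (x,y))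
    (hcr : a < x ∧ x < b ∧ b < y) {p : ℕ} (hp1 : a < p) (hp2 : p < b)
    (hpe1 : IsEdge n T₁ a p) (hpe2 : IsEdge n T₁ p b) : p = x := by
  obtain ⟨c1, c2, c3⟩ := hcr
  obtain ⟨hd1, hd2, hd3⟩ := hda; obtain ⟨hf1', hf2', hf3'⟩ := hdf
  simp only at hd1 hd2 hd3 hf1' hf2' hf3'
  rcases lt_trichotomy p x with h | h | h
  · exact absurd (cross_contra hT₂ hE hf2 hpe2 (by simp; omega) (by omega) (by omega)
      (Or.inl ⟨h, c2, c3⟩)) not_false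
  · exact h
  · exact absurd (cross_contra hT₂ hE hf2 hpe1 (by simp; omega) (by omega) (by omega)
      (Or.inl ⟨c1, h, by omega⟩)) not_false

lemma det_inner2 (hT₂ : IsTriangulation n T₂) (hE : T₁.erase (a,b) = T₂.erase (x,y))
    (hf2 : (x,y) ∈ T₂) (hda : IsDiagonal n (a,b)) (hdf : IsDiagonal n (x,y))
    (hcr : x < a ∧ a < y ∧ y < b) {p : ℕ} (hp1 : a < p) (hp2 : p < b)
    (hpe1 : IsEdge n T₁ a p) (hpe2 : IsEdge n T₁ p b) : p = y := by
  obtain ⟨c1, c2, c3⟩ := hcr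
  obtain ⟨hd1, hd2, hd3⟩ := hda; obtain ⟨hf1', hf2', hf3'⟩ := hdf
  simp only at hd1 hd2 hd3 hf1' hf2' hf3'
  rcases lt_trichotomy p y with h | h | h
  · exact absurd (cross_contra hT₂ hE hf2 hpe2 (by simp; omega) (by omega) (by omega)
      (Or.inr ⟨by omega, h, c3⟩)) not_false
  · exact h
  · exact absurd (cross_contra hT₂ hE hf2 hpe1 (by simp; omega) (by omega) (by omega)
      (Or.inr ⟨c1, c2, h⟩)) not_false

lemma det_outer1 (hT₂ : IsTriangulation n T₂) (hE : T₁.erase (a,b) = T₂.erase (x,y))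
    (hf2 : (x,y) ∈ T₂) (hda : IsDiagonal n (a,b)) (hdf : IsDiagonal n (x,y))
    (hcr : a < x ∧ x < b ∧ b < y) {q : ℕ}
    (hq : (q < a ∧ IsEdge n T₁ q a ∧ IsEdge n T₁ q b) ∨
          (b < q ∧ IsEdge n T₁ a q ∧ IsEdge n T₁ b q)) : q = y := by
  obtain ⟨c1, c2, c3⟩ := hcr
  obtain ⟨hd1, hd2, hd3⟩ := hda; obtain ⟨hf1', hf2', hf3'⟩ := hdf
  simp only at hd1 hd2 hd3 hf1' hf2' hf3'
  rcases hq with ⟨h1, h2, h3⟩ | ⟨h1, h2, h3⟩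
  · exact absurd (cross_contra hT₂ hE hf2 h3 (by simp; omega) (by omega) (by omega)
      (Or.inl ⟨by omega, c2, c3⟩)) not_false
  · rcases lt_trichotomy q y with h | h | h
    · exact absurd (cross_contra hT₂ hE hf2 h2 (by simp; omega) (by omega) (by omega)
        (Or.inl ⟨c1, by omega, h⟩)) not_false
    · exact h
    · exact absurd (cross_contra hT₂ hE hf2 h3 (by simp; omega) (by omega) (by omega)
        (Or.inr ⟨c2, c3, h⟩)) not_false

lemma det_outer2 (hT₂ : IsTriangulation n T₂) (hE : T₁.erase (a,b) = T₂.erase (x,y))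
    (hf2 : (x,y) ∈ T₂) (hda : IsDiagonal n (a,b)) (hdf : IsDiagonal n (x,y))
    (hcr : x < a ∧ a < y ∧ y < b) {q : ℕ}
    (hq : (q < a ∧ IsEdge n T₁ q a ∧ IsEdge n T₁ q b) ∨
          (b < q ∧ IsEdge n T₁ a q ∧ IsEdge n T₁ b q)) : q = x := by
  obtain ⟨c1, c2, c3⟩ := hcr
  obtain ⟨hd1, hd2, hd3⟩ := hda; obtain ⟨hf1', hf2', hf3'⟩ := hdf
  simp only at hd1 hd2 hd3 hf1' hf2' hf3'
  rcases hq with ⟨h1, h2, h3⟩ | ⟨h1, h2, h3⟩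
  · rcases lt_trichotomy q x with h | h | h
    · exact absurd (cross_contra hT₂ hE hf2 h2 (by simp; omega) (by omega) (by omega)
        (Or.inl ⟨h, c1, c2⟩)) not_false
    · exact h
    · exact absurd (cross_contra hT₂ hE hf2 h3 (by simp; omega) (by omega) (by omega)
        (Or.inr ⟨h, by omega, c3⟩)) not_false
  · exact absurd (cross_contra hT₂ hE hf2 h2 (by simp; omega) (by omega) (by omega)
      (Or.inr ⟨c1, c2, by omega⟩)) not_false


lemma mem_trianglesOf {n : ℕ} {T : Finset (ℕ × ℕ)} {t : ℕ × ℕ × ℕ} :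
    t ∈ trianglesOf n T ↔ t.1 < t.2.1 ∧ t.2.1 < t.2.2 ∧ IsEdge n T t.1 t.2.1 ∧
      IsEdge n T t.2.1 t.2.2 ∧ IsEdge n T t.1 t.2.2 := by
  unfold trianglesOf
  simp only [Finset.mem_filter, Finset.mem_product, Finset.mem_range]
  constructor
  · rintro ⟨_, h⟩; exact h
  · rintro ⟨h1, h2, h3, h4, h5⟩
    have := h5.1
    exact ⟨⟨by omega, by omega, by omega⟩, h1, h2, h3, h4, h5⟩

variable {n : ℕ} {T₁ T₂ : Finset (ℕ × ℕ)} {a b x y : ℕ}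

lemma sdiff_eq1 (hT₁ : IsTriangulation n T₁) (hT₂ : IsTriangulation n T₂)
    (hE : T₁.erase (a,b) = T₂.erase (x,y)) (he1 : (a,b) ∈ T₁) (he2 : (a,b) ∉ T₂)
    (hf2 : (x,y) ∈ T₂) (hcr : a < x ∧ x < b ∧ b < y) :
    trianglesOf n T₁ \ trianglesOf n T₂ = {(a,x,b),(a,b,y)} := by
  have hda := hT₁.1 _ he1
  have hdf := hT₂.1 _ hf2
  obtain ⟨p, hp1, hp2, hpe1, hpe2⟩ := inner_exists hT₁ he1
  have hpx := det_inner1 hT₂ hE hf2 hda hdf hcr hp1 hp2 hpe1 hpe2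
  rw [hpx] at hp1 hp2 hpe1 hpe2
  obtain ⟨q, hq⟩ := outer_exists hT₁ he1
  have hqy := det_outer1 hT₂ hE hf2 hda hdf hcr hq
  rw [hqy] at hq
  have hqo : IsEdge n T₁ a y ∧ IsEdge n T₁ b y := by
    rcases hq with ⟨h, _, _⟩ | ⟨_, h1, h2⟩
    · omega
    · exact ⟨h1, h2⟩
  have heab : IsEdge n T₁ a b := ⟨hda.2.1, Or.inr (Or.inr he1)⟩
  have hnab : ¬ IsEdge n T₂ a b := by
    rintro ⟨_, h | h | h⟩
    · have := hda.1; simp at this; omega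
    · exact hda.2.2 h
    · exact he2 h
  ext t
  obtain ⟨t1, t2, t3⟩ := t
  simp only [Finset.mem_sdiff, mem_trianglesOf, Finset.mem_insert, Finset.mem_singleton]
  constructor
  · rintro ⟨⟨h12, h23, e12, e23, e13⟩, hnot⟩
    by_cases hc1 : (t1, t2) = (a, b)
    · simp only [Prod.mk.injEq] at hc1
      obtain ⟨rfl, rfl⟩ := hc1
      have ht3 : t3 = y :=
        det_outer1 hT₂ hE hf2 hda hdf hcr (Or.inr ⟨h23, e13, e23⟩)
      right; rw [ht3]
    · by_cases hc2 : (t2, t3) = (a, b)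
      · simp only [Prod.mk.injEq] at hc2
        obtain ⟨rfl, rfl⟩ := hc2
        have ht1 : t1 = y :=
          det_outer1 hT₂ hE hf2 hda hdf hcr (Or.inl ⟨h12, e12, e13⟩)
        omega
      · by_cases hc3 : (t1, t3) = (a, b)
        · simp only [Prod.mk.injEq] at hc3
          obtain ⟨rfl, rfl⟩ := hc3
          have ht2 : t2 = x :=
            det_inner1 hT₂ hE hf2 hda hdf hcr h12 h23 e12 e23
          left; rw [ht2]
        · exact absurd ⟨h12, h23, edge_transfer hE e12 hc1, edge_transfer hE e23 hc2,
            edge_transfer hE e13 hc3⟩ hnot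
  · rintro (h | h) <;> (simp only [Prod.mk.injEq] at h; obtain ⟨rfl, rfl, rfl⟩ := h)
    · refine ⟨⟨hp1, hp2, hpe1, hpe2, heab⟩, ?_⟩
      rintro ⟨_, _, _, _, e13'⟩
      exact hnab e13'
    · refine ⟨⟨by have := hda.1; simp at this; omega, hcr.2.2, heab, hqo.2, hqo.1⟩, ?_⟩
      rintro ⟨_, _, e12', _, _⟩
      exact hnab e12'

lemma sdiff_eq2 (hT₁ : IsTriangulation n T₁) (hT₂ : IsTriangulation n T₂)
    (hE : T₁.erase (a,b) = T₂.erase (x,y)) (he1 : (a,b) ∈ T₁) (he2 : (a,b) ∉ T₂)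
    (hf2 : (x,y) ∈ T₂) (hcr : x < a ∧ a < y ∧ y < b) :
    trianglesOf n T₁ \ trianglesOf n T₂ = {(x,a,b),(a,y,b)} := by
  have hda := hT₁.1 _ he1
  have hdf := hT₂.1 _ hf2
  obtain ⟨p, hp1, hp2, hpe1, hpe2⟩ := inner_exists hT₁ he1
  have hpy := det_inner2 hT₂ hE hf2 hda hdf hcr hp1 hp2 hpe1 hpe2
  rw [hpy] at hp1 hp2 hpe1 hpe2
  obtain ⟨q, hq⟩ := outer_exists hT₁ he1
  have hqx := det_outer2 hT₂ hE hf2 hda hdf hcr hq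
  rw [hqx] at hq
  have hqo : IsEdge n T₁ x a ∧ IsEdge n T₁ x b := by
    rcases hq with ⟨_, h1, h2⟩ | ⟨h, _, _⟩
    · exact ⟨h1, h2⟩
    · omega
  have heab : IsEdge n T₁ a b := ⟨hda.2.1, Or.inr (Or.inr he1)⟩
  have hnab : ¬ IsEdge n T₂ a b := by
    rintro ⟨_, h | h | h⟩
    · have := hda.1; simp at this; omega
    · exact hda.2.2 h
    · exact he2 h
  ext t
  obtain ⟨t1, t2, t3⟩ := t
  simp only [Finset.mem_sdiff, mem_trianglesOf, Finset.mem_insert, Finset.mem_singleton]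
  constructor
  · rintro ⟨⟨h12, h23, e12, e23, e13⟩, hnot⟩
    by_cases hc1 : (t1, t2) = (a, b)
    · simp only [Prod.mk.injEq] at hc1
      obtain ⟨rfl, rfl⟩ := hc1
      have ht3 : t3 = x :=
        det_outer2 hT₂ hE hf2 hda hdf hcr (Or.inr ⟨h23, e13, e23⟩)
      omega
    · by_cases hc2 : (t2, t3) = (a, b)
      · simp only [Prod.mk.injEq] at hc2
        obtain ⟨rfl, rfl⟩ := hc2
        have ht1 : t1 = x :=
          det_outer2 hT₂ hE hf2 hda hdf hcr (Or.inl ⟨h12, e12, e13⟩)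
        left; rw [ht1]
      · by_cases hc3 : (t1, t3) = (a, b)
        · simp only [Prod.mk.injEq] at hc3
          obtain ⟨rfl, rfl⟩ := hc3
          have ht2 : t2 = y :=
            det_inner2 hT₂ hE hf2 hda hdf hcr h12 h23 e12 e23
          right; rw [ht2]
        · exact absurd ⟨h12, h23, edge_transfer hE e12 hc1, edge_transfer hE e23 hc2,
            edge_transfer hE e13 hc3⟩ hnot
  · rintro (h | h) <;> (simp only [Prod.mk.injEq] at h; obtain ⟨rfl, rfl, rfl⟩ := h)
    · refine ⟨⟨hcr.1, by have := hda.1; simp at this; omega, hqo.1, heab, hqo.2⟩, ?_⟩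
      rintro ⟨_, _, _, e23', _⟩
      exact hnab e23'
    · refine ⟨⟨hp1, hp2, hpe1, hpe2, heab⟩, ?_⟩
      rintro ⟨_, _, _, _, e13'⟩
      exact hnab e13'


lemma flip_weight {n : ℕ} {W : ℕ → ℕ → ℕ → ℝ}
    (hcyc : ∀ i j k, W i j k = W j k i)
    (hanti : ∀ i j k, W i j k = -W i k j)
    (htet : ∀ i j k l, i ≤ n + 1 → j ≤ n + 1 → k ≤ n + 1 → l ≤ n + 1 →
      |W i j l + W j k l + W k i l + W k j i| ≤ 1)
    {T₁ T₂ : Finset (ℕ × ℕ)} (h : IsFlip n T₁ T₂) :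
    |weight n W T₁ - weight n W T₂| ≤ 1 := by
  obtain ⟨hT₁, hT₂, e, f, he1, hf1, heq⟩ := h
  obtain ⟨a, b⟩ := e
  obtain ⟨x, y⟩ := f
  have hf2 : (x,y) ∈ T₂ := by rw [heq]; exact Finset.mem_insert_self _ _
  have he2 : (a,b) ∉ T₂ := by
    rw [heq]
    intro hmem
    rcases Finset.mem_insert.1 hmem with h' | h'
    · rw [h'] at he1; exact hf1 he1
    · exact (Finset.mem_erase.1 h').1 rfl
  have hE : T₁.erase (a,b) = T₂.erase (x,y) := by
    rw [heq]
    ext d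
    simp only [Finset.mem_erase, Finset.mem_insert]
    constructor
    · intro ⟨hd1, hd2⟩
      refine ⟨?_, Or.inr ⟨hd1, hd2⟩⟩
      rintro rfl; exact hf1 hd2
    · rintro ⟨hd1, hd2 | hd2⟩
      · exact absurd hd2 hd1
      · exact hd2
  have hda := hT₁.1 _ he1
  have hdf := hT₂.1 _ hf2
  have hcrs : Crosses (x,y) (a,b) := by
    obtain ⟨g, hg, hcg⟩ := hT₁.2.2 (x,y) hdf hf1
    have hge : g = (a,b) := by
      by_contra hne
      have : g ∈ T₂ := by
        have : g ∈ T₁.erase (a,b) := Finset.mem_erase.2 ⟨hne, hg⟩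
        rw [hE] at this
        exact (Finset.mem_erase.1 this).2
      exact hT₂.2.1 _ hf2 _ this hcg
    rw [hge] at hcg
    exact hcg
  have hb : b ≤ n + 1 := hda.2.1
  have hy : y ≤ n + 1 := hdf.2.1
  rcases hcrs with ⟨h1, h2, h3⟩ | ⟨h1, h2, h3⟩
  · -- x < a < y < b
    have hcr : x < a ∧ a < y ∧ y < b := ⟨h1, h2, h3⟩
    have hD1 := sdiff_eq2 hT₁ hT₂ hE he1 he2 hf2 hcr
    have hD2 := sdiff_eq1 hT₂ hT₁ hE.symm hf2 hf1 he1 hcr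
    have key : weight n W T₁ - weight n W T₂ =
        (W x a b + W a y b) - (W x a y + W x y b) := by
      unfold weight
      rw [← Finset.sum_sdiff_sub_sum_sdiff, hD1, hD2]
      rw [Finset.sum_pair (by simp; omega), Finset.sum_pair (by simp; omega)]
    rw [key]
    have h4 := htet x a b y (by omega) (by omega) (by omega) (by omega)
    have c1 := hanti a b y
    have c2 := hcyc b x y
    have c3 := hcyc b a x
    have c4 := hanti a x b
    have c5 := hcyc x a b
    rw [abs_le] at h4 ⊢
    constructor <;> [linarith; linarith]
  · -- a < x < b < y
    have hcr : a < x ∧ x < b ∧ b < y := ⟨h1, h2, h3⟩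
    have hD1 := sdiff_eq1 hT₁ hT₂ hE he1 he2 hf2 hcr
    have hD2 := sdiff_eq2 hT₂ hT₁ hE.symm hf2 hf1 he1 hcr
    have key : weight n W T₁ - weight n W T₂ =
        (W a x b + W a b y) - (W a x y + W x b y) := by
      unfold weight
      rw [← Finset.sum_sdiff_sub_sum_sdiff, hD1, hD2]
      rw [Finset.sum_pair (by simp; omega), Finset.sum_pair (by simp; omega)]
    rw [key]
    have h4 := htet a x y b (by omega) (by omega) (by omega) (by omega)
    have c1 := hcyc a x y
    have c2 := hcyc y x a
    have c3 := hanti x y a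
    have c4 := hcyc y a b
    have c5 := hanti x y b
    rw [abs_le] at h4 ⊢
    constructor <;> [linarith; linarith]


/-- The fan triangulation at vertex 0. -/
noncomputable def fanT (n : ℕ) : Finset (ℕ × ℕ) :=
  (Finset.Icc 2 n).image (fun k => (0, k))

lemma mem_fanT {n : ℕ} {d : ℕ × ℕ} : d ∈ fanT n ↔ d.1 = 0 ∧ 2 ≤ d.2 ∧ d.2 ≤ n := by
  obtain ⟨u, v⟩ := d
  simp only [fanT, Finset.mem_image, Finset.mem_Icc, Prod.mk.injEq]
  constructor
  · rintro ⟨k, ⟨hk1, hk2⟩, h1, h2⟩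
    exact ⟨h1.symm, by omega⟩
  · rintro ⟨h1, h2, h3⟩
    exact ⟨v, ⟨h2, h3⟩, h1.symm, rfl⟩

lemma fan_is_tri (n : ℕ) : IsTriangulation n (fanT n) := by
  refine ⟨?_, ?_, ?_⟩
  · intro d hd
    rw [mem_fanT] at hd
    exact ⟨by omega, by omega, by omega⟩
  · intro d hd e he
    rw [mem_fanT] at hd he
    rintro (⟨h1, _, _⟩ | ⟨h1, _, _⟩) <;> omega
  · intro d hdiag hd
    obtain ⟨u, v⟩ := d
    obtain ⟨hd1, hd2, hd3⟩ := hdiag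
    simp only at hd1 hd2 hd3
    rw [mem_fanT] at hd
    simp only at hd
    have hu : u ≠ 0 := by
      intro h
      exact hd ⟨h, by omega, by omega⟩
    refine ⟨(0, u+1), mem_fanT.2 ⟨rfl, by omega, by omega⟩, Or.inr ⟨by omega, by omega, by omega⟩⟩

lemma step {n : ℕ} {T : Finset (ℕ × ℕ)} (hT : IsTriangulation n T) (hne : T ≠ fanT n) :
    ∃ T', IsFlip n T T' ∧
      (T'.filter (fun d => d.1 ≠ 0)).card < (T.filter (fun d => d.1 ≠ 0)).card := by
  classical
  by_cases hall : ∀ k, 1 ≤ k → k ≤ n + 1 → IsEdge n T 0 k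
  · exfalso
    apply hne
    apply Finset.Subset.antisymm
    · intro d hd
      obtain ⟨u, v⟩ := d
      obtain ⟨hd1, hd2, hd3⟩ := hT.1 _ hd
      simp only at hd1 hd2 hd3
      rcases Nat.eq_zero_or_pos u with hu | hu
      · subst hu
        exact mem_fanT.2 ⟨rfl, by omega, by omega⟩
      · exfalso
        have h1 : (0, u+1) ∈ T :=
          edge_mem (hall (u+1) (by omega) (by omega)) (by omega) (by omega)
        exact hT.2.1 _ hd _ h1 (Or.inr ⟨by omega, by omega, by omega⟩)
    · intro d hd
      rw [mem_fanT] at hd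
      obtain ⟨u, v⟩ := d
      simp only at hd
      obtain ⟨rfl, h2, h3⟩ := hd
      exact edge_mem (hall v (by omega) (by omega)) (by omega) (by omega)
  · push_neg at hall
    obtain ⟨k, hk1, hk2, hk⟩ := hall
    have hknotone : k ≠ 1 := by
      rintro rfl
      exact hk ⟨by omega, Or.inl rfl⟩
    have hknotn1 : k ≠ n + 1 := by
      rintro rfl
      exact hk ⟨le_refl _, Or.inr (Or.inl ⟨rfl, rfl⟩)⟩
    have hcex : ∃ c, c < k ∧ 1 ≤ c ∧ IsEdge n T 0 c ∧
        (∀ m, m < k → 1 ≤ m → IsEdge n T 0 m → m ≤ c) := by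
      classical
      set sc := (Finset.range k).filter (fun c => 1 ≤ c ∧ IsEdge n T 0 c) with hsc
      have hnec : sc.Nonempty := by
        refine ⟨1, ?_⟩
        simp only [hsc, Finset.mem_filter, Finset.mem_range]
        exact ⟨by omega, le_refl _, by omega, Or.inl rfl⟩
      have hcm := sc.max'_mem hnec
      have hcc1 := (Finset.mem_filter.1 hcm).2
      have hcc2 := Finset.mem_range.1 (Finset.mem_filter.1 hcm).1
      refine ⟨sc.max' hnec, hcc2, hcc1.1, hcc1.2, ?_⟩
      intro m hm1 hm2 hm3
      exact sc.le_max' m (by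
        simp only [hsc, Finset.mem_filter, Finset.mem_range]
        exact ⟨hm1, hm2, hm3⟩)
    obtain ⟨c, hck, hc1, hce, hcmax⟩ := hcex
    have hc'ex : ∃ c', k < c' ∧ c' ≤ n + 1 ∧ IsEdge n T 0 c' ∧
        (∀ m, k < m → m ≤ n + 1 → IsEdge n T 0 m → c' ≤ m) := by
      classical
      set sc' := (Finset.range (n+2)).filter (fun c' => k < c' ∧ IsEdge n T 0 c') with hsc'
      have hnec' : sc'.Nonempty := by
        refine ⟨n+1, ?_⟩
        simp only [hsc', Finset.mem_filter, Finset.mem_range]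
        exact ⟨by omega, by omega, le_refl _, Or.inr (Or.inl ⟨rfl, rfl⟩)⟩
      have hc'm := sc'.min'_mem hnec'
      have hc'1 := (Finset.mem_filter.1 hc'm).2
      have hc'2 := Finset.mem_range.1 (Finset.mem_filter.1 hc'm).1
      refine ⟨sc'.min' hnec', hc'1.1, by omega, hc'1.2, ?_⟩
      intro m hm1 hm2 hm3
      exact sc'.min'_le m (by
        simp only [hsc', Finset.mem_filter, Finset.mem_range]
        exact ⟨by omega, hm1, hm3⟩)
    obtain ⟨c', hkc', hc'n, hc'e, hc'min⟩ := hc'ex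
    have hbetween : ∀ m, c < m → m < c' → ¬ IsEdge n T 0 m := by
      intro m hm1 hm2 hedge
      rcases lt_trichotomy m k with h | h | h
      · have := hcmax m h (by omega) hedge
        omega
      · exact hk (h ▸ hedge)
      · have := hc'min m h (by omega) hedge
        omega
    -- (c, c') ∈ T
    have hcc'T : (c, c') ∈ T := by
      by_contra hmem
      have hdiag : IsDiagonal n (c, c') := ⟨by simp; omega, by simpa using hc'n, by simp; omega⟩
      obtain ⟨g, hg, hcg⟩ := hT.2.2 _ hdiag hmem
      obtain ⟨u, v⟩ := g
      have hduv := hT.1 _ hg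
      simp only [IsDiagonal] at hduv
      rcases hcg with ⟨h1, h2, h3⟩ | ⟨h1, h2, h3⟩
      · -- c < u < c' < v
        simp only at h1 h2 h3
        have hc'T : (0, c') ∈ T := edge_mem hc'e (by omega) (by omega)
        exact hT.2.1 _ hc'T _ hg (Or.inl ⟨by omega, h2, h3⟩)
      · -- u < c < v < c'
        simp only at h1 h2 h3
        rcases Nat.eq_zero_or_pos u with hu | hu
        · subst hu
          exact hbetween v h2 h3 ⟨hduv.2.1, Or.inr (Or.inr hg)⟩
        · have hcT : (0, c) ∈ T := edge_mem hce (by omega) (by omega)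
          exact hT.2.1 _ hcT _ hg (Or.inl ⟨by omega, h1, h2⟩)
    obtain ⟨p, hp1, hp2, hpe1, hpe2⟩ := inner_exists hT hcc'T
    have hfnot : (0, p) ∉ T := fun h =>
      hbetween p hp1 hp2 ⟨(hT.1 _ h).2.1, Or.inr (Or.inr h)⟩
    have hp2' : p ≤ n := by omega
    -- the two known interior edges as members of T
    have hcpT : p = c + 1 ∨ (c, p) ∈ T := by
      rcases hpe1.2 with h | h | h
      · exact Or.inl h
      · omega
      · exact Or.inr h
    have hpc'T : c' = p + 1 ∨ (p, c') ∈ T := by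
      rcases hpe2.2 with h | h | h
      · exact Or.inl h
      · omega
      · exact Or.inr h
    set T' := insert (0, p) (T.erase (c, c')) with hT'def
    have hmemT' : ∀ {u v : ℕ}, (u, v) ∈ T.erase (c, c') → (u, v) ∈ T ∧ (u, v) ≠ (c, c') :=
      fun h => ⟨(Finset.mem_erase.1 h).2, (Finset.mem_erase.1 h).1⟩
    -- no member of T.erase (c,c') crosses (0,p)
    have hnc : ∀ u v : ℕ, (u, v) ∈ T.erase (c, c') → ¬ Crosses (0, p) (u, v) := by
      intro u v huv hcr
      obtain ⟨huvT, huvne⟩ := hmemT' huv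
      have hdv : v ≤ n + 1 := (hT.1 _ huvT).2.1
      have h1 : 0 < u ∧ u < p ∧ p < v := by
        rcases hcr with ⟨a1, a2, a3⟩ | ⟨a1, a2, a3⟩
        · exact ⟨a1, a2, a3⟩
        · simp at a1
      obtain ⟨hu0, hup, hpv⟩ := h1
      rcases lt_trichotomy u c with h | h | h
      · have hcT : (0, c) ∈ T := edge_mem hce (by omega) (by omega)
        exact hT.2.1 _ hcT _ huvT (Or.inl ⟨by omega, h, by omega⟩)
      · subst h
        rcases lt_trichotomy v c' with h' | h' | h'
        · rcases hpc'T with hside | hmem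
          · omega
          · exact hT.2.1 _ hmem _ huvT (Or.inr ⟨hup, by omega, h'⟩)
        · exact huvne (by rw [h'])
        · have hc'T : (0, c') ∈ T := edge_mem hc'e (by omega) (by omega)
          exact hT.2.1 _ hc'T _ huvT (Or.inl ⟨by omega, by omega, h'⟩)
      · rcases hcpT with hside | hmem
        · omega
        · exact hT.2.1 _ hmem _ huvT (Or.inl ⟨h, hup, hpv⟩)
    have htri' : IsTriangulation n T' := by
      refine ⟨?_, ?_, ?_⟩
      · intro d hd
        rcases Finset.mem_insert.1 hd with h | h
        · subst h
          exact ⟨by simp; omega, by simp; omega, by simp; omega⟩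
        · exact hT.1 _ (Finset.mem_erase.1 h).2
      · intro d hd e he
        rcases Finset.mem_insert.1 hd with h | h <;> rcases Finset.mem_insert.1 he with h' | h'
        · subst h; subst h'
          rintro (⟨a1, _, _⟩ | ⟨a1, _, _⟩) <;> exact lt_irrefl _ a1
        · subst h
          obtain ⟨u, v⟩ := e
          exact hnc u v h'
        · subst h'
          obtain ⟨u, v⟩ := d
          intro hcr
          apply hnc u v h
          rcases hcr with ⟨a1, a2, a3⟩ | ⟨a1, a2, a3⟩
          · exact Or.inr ⟨a1, a2, a3⟩
          · exact Or.inl ⟨a1, a2, a3⟩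
        · exact hT.2.1 _ (Finset.mem_erase.1 h).2 _ (Finset.mem_erase.1 h').2
      · intro d hdiag hd
        obtain ⟨u, v⟩ := d
        obtain ⟨hd1, hd2, hd3⟩ := hdiag
        simp only at hd1 hd2 hd3
        by_cases hde : (u, v) = (c, c')
        · refine ⟨(0, p), Finset.mem_insert_self _ _, ?_⟩
          simp only [Prod.mk.injEq] at hde
          obtain ⟨rfl, rfl⟩ := hde
          exact Or.inr ⟨by omega, hp1, hp2⟩
        · have hdT : (u, v) ∉ T := by
            intro hmem
            exact hd (Finset.mem_insert_of_mem (Finset.mem_erase.2 ⟨hde, hmem⟩))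
          have hdf : (u, v) ≠ (0, p) := by
            intro h
            rw [h] at hd
            exact hd (Finset.mem_insert_self _ _)
          by_cases hex : ∃ g ∈ T.erase (c, c'), Crosses (u, v) g
          · obtain ⟨g, hg, hcg⟩ := hex
            exact ⟨g, Finset.mem_insert_of_mem hg, hcg⟩
          · push_neg at hex
            have hce2 : Crosses (u, v) (c, c') := by
              obtain ⟨g, hg, hcg⟩ := hT.2.2 _ ⟨hd1, hd2, hd3⟩ hdT
              have : g = (c, c') := by
                by_contra hgne
                exact hex g (Finset.mem_erase.2 ⟨hgne, hg⟩) hcg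
              rw [this] at hcg
              exact hcg
            refine ⟨(0, p), Finset.mem_insert_self _ _, Or.inr ?_⟩
            -- need 0 < u ∧ u < p ∧ p < v
            rcases hce2 with ⟨h1, h2, h3⟩ | ⟨h1, h2, h3⟩
            · -- u < c < v < c'
              simp only at h1 h2 h3
              rcases lt_trichotomy v p with h' | h' | h'
              · exfalso
                rcases hcpT with hside | hmem
                · omega
                · exact hex (c, p) (Finset.mem_erase.2 ⟨by simp; omega, hmem⟩)
                    (Or.inl ⟨h1, h2, h'⟩)
              · exfalso
                subst h'
                rcases Nat.eq_zero_or_pos u with hu | hu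
                · exact hdf (by rw [hu])
                · have hcT : (0, c) ∈ T := edge_mem hce (by omega) (by omega)
                  exact hex (0, c) (Finset.mem_erase.2 ⟨by simp; omega, hcT⟩)
                    (Or.inr ⟨hu, h1, by omega⟩)
              · rcases Nat.eq_zero_or_pos u with hu | hu
                · exfalso
                  subst hu
                  rcases hpc'T with hside | hmem
                  · omega
                  · exact hex (p, c') (Finset.mem_erase.2 ⟨by simp; omega, hmem⟩)
                      (Or.inl ⟨by omega, h', h3⟩)
                · exact ⟨hu, by omega, h'⟩
            · -- c < u < c' < v
              simp only at h1 h2 h3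
              rcases lt_trichotomy u p with h' | h' | h'
              · exact ⟨by omega, h', by omega⟩
              · exfalso
                subst h'
                have hc'T : (0, c') ∈ T := edge_mem hc'e (by omega) (by omega)
                exact hex (0, c') (Finset.mem_erase.2 ⟨by simp; omega, hc'T⟩)
                  (Or.inr ⟨by omega, h2, h3⟩)
              · exfalso
                rcases hpc'T with hside | hmem
                · omega
                · exact hex (p, c') (Finset.mem_erase.2 ⟨by simp; omega, hmem⟩)
                    (Or.inr ⟨h', h2, h3⟩)
    refine ⟨T', ⟨hT, htri', (c, c'), (0, p), hcc'T, hfnot, hT'def⟩, ?_⟩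
    have hfilter : T'.filter (fun d => d.1 ≠ 0) = (T.filter (fun d => d.1 ≠ 0)).erase (c, c') := by
      rw [hT'def, Finset.filter_insert]
      simp only [ne_eq, not_true_eq_false, if_false]
      rw [Finset.filter_erase]
    rw [hfilter]
    have hmemf : (c, c') ∈ T.filter (fun d => d.1 ≠ 0) := by
      simp only [Finset.mem_filter]
      exact ⟨hcc'T, by simp; omega⟩
    have := Finset.card_erase_of_mem hmemf
    have hpos : 0 < (T.filter (fun d => d.1 ≠ 0)).card := Finset.card_pos.2 ⟨_, hmemf⟩
    omega


lemma flip_symm {n : ℕ} {T₁ T₂ : Finset (ℕ × ℕ)} (h : IsFlip n T₁ T₂) : IsFlip n T₂ T₁ := by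
  obtain ⟨h1, h2, e, f, he, hf, heq⟩ := h
  refine ⟨h2, h1, f, e, ?_, ?_, ?_⟩
  · rw [heq]; exact Finset.mem_insert_self _ _
  · rw [heq]
    intro hmem
    rcases Finset.mem_insert.1 hmem with h' | h'
    · rw [h'] at he; exact hf he
    · exact (Finset.mem_erase.1 h').1 rfl
  · ext d
    simp only [heq, Finset.mem_insert, Finset.mem_erase]
    constructor
    · intro hd
      by_cases hde : d = e
      · exact Or.inl hde
      · refine Or.inr ⟨?_, Or.inr ⟨hde, hd⟩⟩
        rintro rfl; exact hf hd
    · rintro (rfl | ⟨hdf, rfl | ⟨hde, hd⟩⟩)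
      · exact he
      · exact absurd rfl hdf
      · exact hd

lemma rtg_symm {α : Type*} {r : α → α → Prop} (hr : ∀ a b, r a b → r b a) {a b : α}
    (h : Relation.ReflTransGen r a b) : Relation.ReflTransGen r b a := by
  induction h with
  | refl => exact Relation.ReflTransGen.refl
  | tail _ hbc ih => exact Relation.ReflTransGen.head (hr _ _ hbc) ih

lemma reach_fan {n : ℕ} : ∀ m (T : Finset (ℕ × ℕ)),
    (T.filter (fun d => d.1 ≠ 0)).card ≤ m → IsTriangulation n T →
    Relation.ReflTransGen (IsFlip n) T (fanT n) := by
  intro m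
  induction m with
  | zero =>
    intro T hm hT
    by_cases h : T = fanT n
    · rw [h]
    · obtain ⟨T', hf, hlt⟩ := step hT h
      omega
  | succ m ih =>
    intro T hm hT
    by_cases h : T = fanT n
    · rw [h]
    · obtain ⟨T', hf, hlt⟩ := step hT h
      exact Relation.ReflTransGen.head hf (ih T' (by omega) hf.2.1)

lemma rtg_chain {n : ℕ} {A B : Finset (ℕ × ℕ)} (h : Relation.ReflTransGen (IsFlip n) A B) :
    ∃ m : ℕ, ∃ g : ℕ → Finset (ℕ × ℕ), g 0 = A ∧ g m = B ∧
      ∀ i < m, IsFlip n (g i) (g (i + 1)) := by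
  induction h with
  | refl => exact ⟨0, fun _ => A, rfl, rfl, by omega⟩
  | @tail b c _ hbc ih =>
    obtain ⟨m, g, h0, hm, hf⟩ := ih
    refine ⟨m + 1, fun i => if i ≤ m then g i else c, ?_, ?_, ?_⟩
    · simp only [Nat.zero_le, if_pos]; exact h0
    · simp only [if_neg (by omega : ¬ m + 1 ≤ m)]
    · intro i hi
      dsimp only
      rcases Nat.lt_or_ge i m with h' | h'
      · rw [if_pos (by omega : i ≤ m), if_pos (by omega : i + 1 ≤ m)]
        exact hf i h'
      · have hieq : i = m := by omega
        rw [if_pos (by omega : i ≤ m), if_neg (by omega : ¬ i + 1 ≤ m), hieq, hm]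
        exact hbc

lemma path_bound {n : ℕ} {W : ℕ → ℕ → ℕ → ℝ}
    (hcyc : ∀ i j k, W i j k = W j k i)
    (hanti : ∀ i j k, W i j k = -W i k j)
    (htet : ∀ i j k l, i ≤ n + 1 → j ≤ n + 1 → k ≤ n + 1 → l ≤ n + 1 →
      |W i j l + W j k l + W k i l + W k j i| ≤ 1) :
    ∀ m (g : ℕ → Finset (ℕ × ℕ)), (∀ i < m, IsFlip n (g i) (g (i + 1))) →
      |weight n W (g 0) - weight n W (g m)| ≤ m := by
  intro m
  induction m with
  | zero => intro g _; simp
  | succ m ih =>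
    intro g hg
    have h1 := ih g (fun i hi => hg i (by omega))
    have h2 := flip_weight hcyc hanti htet (hg m (by omega))
    have h3 : |weight n W (g 0) - weight n W (g (m + 1))| ≤
        |weight n W (g 0) - weight n W (g m)| + |weight n W (g m) - weight n W (g (m + 1))| :=
      abs_sub_le _ _ _
    push_cast
    push_cast at h1
    linarith


end FlipAux

open FlipAux in
/-- If an antisymmetric weight function `W` on oriented triples of the
vertices of the `(n+2)`-gon satisfies the tetrahedral constraints, and there
are two triangulations `T_i`, `T_f` with `W(T_i) - W(T_f) = 2n - 6`, then the
diameter of the flip graph on triangulations of the `(n+2)`-gon is at least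
`2n - 6`. -/
theorem flip_graph_diameter_lower_bound (n : ℕ) (W : ℕ → ℕ → ℕ → ℝ)
    (hcyc : ∀ i j k, W i j k = W j k i)
    (hanti : ∀ i j k, W i j k = -W i k j)
    (htet : ∀ i j k l, i ≤ n + 1 → j ≤ n + 1 → k ≤ n + 1 → l ≤ n + 1 →
      |W i j l + W j k l + W k i l + W k j i| ≤ 1)
    (Ti Tf : Finset (ℕ × ℕ)) (hTi : IsTriangulation n Ti)
    (hTf : IsTriangulation n Tf)
    (hW : weight n W Ti - weight n W Tf = 2 * n - 6) :
    ∃ T₁ T₂ : Finset (ℕ × ℕ), IsTriangulation n T₁ ∧ IsTriangulation n T₂ ∧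
      (2 * n - 6 : ℝ) ≤ (flipDist n T₁ T₂ : ℝ) := by
  refine ⟨Ti, Tf, hTi, hTf, ?_⟩
  have hreach : Relation.ReflTransGen (IsFlip n) Ti Tf :=
    (reach_fan _ Ti le_rfl hTi).trans
      (rtg_symm (fun _ _ h => flip_symm h) (reach_fan _ Tf le_rfl hTf))
  obtain ⟨m, g, hg0, hgm, hflips⟩ := rtg_chain hreach
  have hSne : {m | ∃ g : ℕ → Finset (ℕ × ℕ), g 0 = Ti ∧ g m = Tf ∧
      ∀ i < m, IsFlip n (g i) (g (i + 1))}.Nonempty := ⟨m, g, hg0, hgm, hflips⟩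
  have hmem := Nat.sInf_mem hSne
  obtain ⟨g', hg'0, hg'm, hflips'⟩ := hmem
  have hbound := path_bound hcyc hanti htet _ g' hflips'
  rw [hg'0, hg'm, hW] at hbound
  have habs : (2 * (n:ℝ) - 6) ≤ |(2 * (n:ℝ) - 6)| := le_abs_self _
  unfold flipDist
  linarith
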